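/- Let G be a finitely generated abelian group with finite symmetric generating set S = S⁻¹ (1 ∉ S) and word metric d. Then there is a constant C (depending only on G and S) such that every rigid triple {x,y,z} in (G,d) satisfies d(x,y) + d(y,z) + d(z,x) ≤ C · d(x,y). -/

import Mathlib

open Filter Topology

/-- `T` is a valid domain for a ray: an unbounded subset of `[0,∞)` containing `0`. -/
def IsRayDomain (T : Set ℝ) : Prop :=
  T ⊆ Set.Ici (0 : ℝ) ∧ 0 ∈ T ∧ ∀ M : ℝ, ∃ t ∈ T, M < t

/-- A weakly-geodesic ray for the distance function `d`. -/
def WeaklyGeodesicRay {X : Type*} (d : X → X → ℝ) (T : Set ℝ) (γ : ℝ → X) : Prop :=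
  ∀ y : X, ∀ ε : ℝ, 0 < ε → ∃ N : ℝ, ∀ s ∈ T, ∀ t ∈ T, N ≤ s → N ≤ t →
    |d (γ t) (γ 0) - t| < ε ∧ |d (γ t) y - d (γ s) y - (t - s)| < ε

/-- An almost-geodesic ray for the distance function `d`. -/
def AlmostGeodesicRay {X : Type*} (d : X → X → ℝ) (T : Set ℝ) (γ : ℝ → X) : Prop :=
  ∀ ε : ℝ, 0 < ε → ∃ N : ℝ, ∀ s ∈ T, ∀ t ∈ T, N ≤ s → s ≤ t →
    |d (γ t) (γ s) + d (γ s) (γ 0) - t| < ε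

/-- A geodesic ray for the distance function `d`. -/
def GeodesicRay {X : Type*} (d : X → X → ℝ) (T : Set ℝ) (γ : ℝ → X) : Prop :=
  ∀ s ∈ T, ∀ t ∈ T, d (γ s) (γ t) = |s - t|

/-- `L` is the limit of `d(γ(t),y) - d(γ(t),z)` as `t → ∞` along `T`. -/
def RayLimit {X : Type*} (d : X → X → ℝ) (T : Set ℝ) (γ : ℝ → X) (y z : X) (L : ℝ) : Prop :=
  Tendsto (fun t => d (γ t) y - d (γ t) z) (atTop ⊓ 𝓟 T) (𝓝 L)

/-- Minimal paths from `a` to `c` and from `b` to `c` share a tail: there is a vertex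
`z ≠ c` lying simultaneously on a minimal path from `a` to `c` and on one from `b` to `c`. -/
def ShareTail {V : Type*} (d : V → V → ℕ) (a b c : V) : Prop :=
  ∃ z, z ≠ c ∧ d a z + d z c = d a c ∧ d b z + d z c = d b c

/-- No minimal paths from apex `x` to `y` and from `x` to `z` share a vertex other than `x`. -/
def RigidApex {V : Type*} (d : V → V → ℕ) (x y z : V) : Prop :=
  ∀ w, w ≠ x → ¬(d x w + d w y = d x y ∧ d x w + d w z = d x z)

/-- A rigid triple: three distinct vertices, rigid at each apex. -/
def RigidTriple {V : Type*} (d : V → V → ℕ) (x y z : V) : Prop :=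
  x ≠ y ∧ y ≠ z ∧ x ≠ z ∧
    RigidApex d x y z ∧ RigidApex d y x z ∧ RigidApex d z x y

/-- The word metric on a group `G` with respect to a generating set `S`:
`wordDist S g h` is the least `n` such that `g⁻¹ * h` is a product of `n` elements of `S`. -/
noncomputable def wordDist {G : Type*} [Group G] (S : Set G) (g h : G) : ℕ :=
  sInf {n | ∃ l : List G, l.length = n ∧ (∀ x ∈ l, x ∈ S) ∧ l.prod = g⁻¹ * h}

namespace Stmt11Aux

variable {G : Type*} [CommGroup G] (S : Set G)

/-- the set of lengths of words over `S` representing `g`. -/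
def relSet (g : G) : Set ℕ :=
  {n | ∃ l : List G, l.length = n ∧ (∀ x ∈ l, x ∈ S) ∧ l.prod = g}

/-- the word norm. -/
noncomputable def nu (g : G) : ℕ := sInf (relSet S g)

lemma wordDist_eq (x y : G) : wordDist S x y = nu S (x⁻¹ * y) := rfl

section basic
variable (hSsym : ∀ s ∈ S, s⁻¹ ∈ S) (hgen : Subgroup.closure S = ⊤)

include hSsym hgen in
lemma relSet_nonempty (g : G) : (relSet S g).Nonempty := by
  have hg : g ∈ Submonoid.closure S := by
    have h1 : g ∈ (Subgroup.closure S).toSubmonoid := by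
      rw [hgen]; trivial
    rw [Subgroup.closure_toSubmonoid] at h1
    have : S ∪ S⁻¹ = S := by
      apply Set.union_eq_self_of_subset_right
      intro s hs
      rw [Set.mem_inv] at hs
      simpa using hSsym _ hs
    rwa [this] at h1
  obtain ⟨l, hl, hprod⟩ := Submonoid.exists_list_of_mem_closure hg
  exact ⟨l.length, l, rfl, hl, hprod⟩

include hSsym hgen in
lemma exists_list_nu (g : G) :
    ∃ l : List G, l.length = nu S g ∧ (∀ x ∈ l, x ∈ S) ∧ l.prod = g :=
  Nat.sInf_mem (relSet_nonempty S hSsym hgen g)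

lemma nu_le_of_list (l : List G) (hl : ∀ x ∈ l, x ∈ S) : nu S l.prod ≤ l.length :=
  Nat.sInf_le ⟨l, rfl, hl, rfl⟩

lemma nu_one : nu S (1 : G) = 0 :=
  Nat.le_zero.1 (by simpa using nu_le_of_list S [] (by simp))

lemma eq_one_of_nu_eq_zero {g : G} (h : nu S g = 0) (hne : (relSet S g).Nonempty) :
    g = 1 := by
  have h0 : 0 ∈ relSet S g := by
    rw [← h]; exact Nat.sInf_mem hne
  obtain ⟨l, hlen, _, hprod⟩ := h0
  rw [List.length_eq_zero_iff] at hlen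
  subst hlen; simpa using hprod.symm

lemma nu_mul_le (g h : G) (hg : (relSet S g).Nonempty) (hh : (relSet S h).Nonempty) :
    nu S (g * h) ≤ nu S g + nu S h := by
  obtain ⟨l1, hl1, hm1, hp1⟩ := Nat.sInf_mem hg
  obtain ⟨l2, hl2, hm2, hp2⟩ := Nat.sInf_mem hh
  have := nu_le_of_list S (l1 ++ l2) (by
    intro x hx; rcases List.mem_append.1 hx with h | h
    exacts [hm1 x h, hm2 x h])
  rwa [List.prod_append, hp1, hp2, List.length_append, hl1, hl2] at this

include hSsym in
lemma relSet_inv_subset (u : G) : relSet S u ⊆ relSet S u⁻¹ := by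
  rintro n ⟨l, rfl, hm, rfl⟩
  refine ⟨l.map (·⁻¹), by simp, ?_, ?_⟩
  · intro x hx
    simp only [List.mem_map] at hx
    obtain ⟨a, ha, rfl⟩ := hx
    exact hSsym a (hm a ha)
  · induction l with
    | nil => simp
    | cons a l ih =>
      simp only [List.map_cons, List.prod_cons, mul_inv_rev]
      rw [ih (fun x hx => hm x (List.mem_cons_of_mem a hx))]
      exact mul_comm _ _

include hSsym in
lemma nu_inv (g : G) : nu S g⁻¹ = nu S g := by
  have h1 : relSet S g = relSet S g⁻¹ := by
    apply le_antisymm (relSet_inv_subset S hSsym g)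
    have := relSet_inv_subset S hSsym g⁻¹
    rwa [inv_inv] at this
  rw [nu, nu, h1]

end basic



variable [Fintype ↥S]

/-- product of a nonneg. exponent vector -/
def Pn (c : ↥S → ℕ) : G := ∏ s : ↥S, (s : G) ^ (c s)

/-- product of an integer exponent vector -/
def Pz (x : ↥S → ℤ) : G := ∏ s : ↥S, (s : G) ^ (x s)

/-- total weight -/
def wt {S : Set G} [Fintype ↥S] (c : ↥S → ℕ) : ℕ := ∑ s : ↥S, c s

/-- ℓ¹ norm -/
def l1 {S : Set G} [Fintype ↥S] (x : ↥S → ℤ) : ℕ := ∑ s : ↥S, (x s).natAbs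

/-- positive part -/
def pos {S : Set G} (x : ↥S → ℤ) : ↥S → ℕ := fun s => (x s).toNat

/-- negative part -/
def neg {S : Set G} (x : ↥S → ℤ) : ↥S → ℕ := fun s => (-(x s)).toNat

lemma Pn_add (c d : ↥S → ℕ) : Pn S (c + d) = Pn S c * Pn S d := by
  rw [Pn, Pn, Pn, ← Finset.prod_mul_distrib]
  exact Finset.prod_congr rfl fun s _ => by simp [pow_add]

lemma Pz_add (x y : ↥S → ℤ) : Pz S (x + y) = Pz S x * Pz S y := by
  rw [Pz, Pz, Pz, ← Finset.prod_mul_distrib]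
  exact Finset.prod_congr rfl fun s _ => by simp [zpow_add]

lemma Pz_sub (x y : ↥S → ℤ) : Pz S (x - y) = Pz S x * (Pz S y)⁻¹ := by
  rw [Pz, Pz, Pz, ← Finset.prod_inv_distrib, ← Finset.prod_mul_distrib]
  exact Finset.prod_congr rfl fun s _ => by
    rw [Pi.sub_apply, zpow_sub]

lemma Pz_natCast (c : ↥S → ℕ) : Pz S (fun s => (c s : ℤ)) = Pn S c := by
  rw [Pz, Pn]
  exact Finset.prod_congr rfl fun s _ => by simp [zpow_natCast]

lemma Pz_eq_pos_neg (x : ↥S → ℤ) : Pz S x = Pn S (pos x) * (Pn S (neg x))⁻¹ := by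
  have : x = (fun s => ((pos x s : ℤ))) - (fun s => ((neg x s : ℤ))) := by
    funext s
    simp only [Pi.sub_apply, pos, neg]
    omega
  rw [show Pz S x = Pz S ((fun s => ((pos x s : ℤ))) - fun s => ((neg x s : ℤ))) by rw [← this],
    Pz_sub, Pz_natCast, Pz_natCast]


section withgen
variable (hSsym : ∀ s ∈ S, s⁻¹ ∈ S) (hgen : Subgroup.closure S = ⊤)

include hSsym hgen

lemma nu_pow_le (s : ↥S) (n : ℕ) : nu S ((s : G) ^ n) ≤ n := by
  induction n with
  | zero => simpa [pow_zero] using Nat.le_of_eq (nu_one S)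
  | succ n ih =>
    rw [pow_succ]
    calc nu S ((s : G) ^ n * s) ≤ nu S ((s : G) ^ n) + nu S (s : G) :=
          nu_mul_le S _ _ (relSet_nonempty S hSsym hgen _) (relSet_nonempty S hSsym hgen _)
      _ ≤ n + 1 := by
          have h1 : nu S (s : G) ≤ 1 := by
            have := nu_le_of_list S [(s : G)] (by simpa using s.2)
            simpa using this
          omega

lemma nu_Pn_le (c : ↥S → ℕ) : nu S (Pn S c) ≤ wt c := by
  rw [Pn, wt]
  classical
  induction (Finset.univ : Finset ↥S) using Finset.induction_on with
  | empty => simpa using Nat.le_of_eq (nu_one S)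
  | insert a t hx ih =>
    rw [Finset.prod_insert hx, Finset.sum_insert hx]
    calc nu S ((a : G) ^ c a * ∏ s ∈ t, (s : G) ^ c s)
        ≤ nu S ((a : G) ^ c a) + nu S (∏ s ∈ t, (s : G) ^ c s) :=
          nu_mul_le S _ _ (relSet_nonempty S hSsym hgen _) (relSet_nonempty S hSsym hgen _)
      _ ≤ c a + ∑ s ∈ t, c s := Nat.add_le_add (nu_pow_le S hSsym hgen a (c a)) ih

end withgen

lemma list_to_vec (l : List G) (hm : ∀ x ∈ l, x ∈ S) :
    ∃ c : ↥S → ℕ, Pn S c = l.prod ∧ wt c = l.length := by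
  classical
  induction l with
  | nil =>
    exact ⟨0, by simp [Pn, wt], by simp [wt]⟩
  | cons a l ih =>
    obtain ⟨c, hc1, hc2⟩ := ih (fun x hx => hm x (List.mem_cons_of_mem a hx))
    have ha : a ∈ S := hm a List.mem_cons_self
    set t : ↥S := ⟨a, ha⟩ with ht
    refine ⟨c + Pi.single t 1, ?_, ?_⟩
    · rw [Pn_add, hc1]
      have : Pn S (Pi.single t 1) = a := by
        rw [Pn]
        rw [Finset.prod_eq_single t]
        · simp [ht]
        · intro b _ hb
          rw [Pi.single_eq_of_ne hb, pow_zero]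
        · simp
      rw [this, List.prod_cons, mul_comm]
    · rw [wt, List.length_cons]
      simp only [Pi.add_apply, Finset.sum_add_distrib, Finset.sum_pi_single, Finset.mem_univ,
        if_true]
      rw [← wt, hc2, Finset.sum_pi_single']
      simp

lemma exists_geodesic_vec (hSsym : ∀ s ∈ S, s⁻¹ ∈ S) (hgen : Subgroup.closure S = ⊤)
    (g : G) : ∃ c : ↥S → ℕ, Pn S c = g ∧ wt c = nu S g := by
  obtain ⟨l, hlen, hm, hprod⟩ := exists_list_nu S hSsym hgen g
  obtain ⟨c, hc1, hc2⟩ := list_to_vec S l hm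
  exact ⟨c, by rw [hc1, hprod], by rw [hc2, hlen]⟩

lemma prefix_exact (hSsym : ∀ s ∈ S, s⁻¹ ∈ S) (hgen : Subgroup.closure S = ⊤)
    {u : G} {c d : ↥S → ℕ} (hc : Pn S c = u) (hw : wt c = nu S u) (hle : d ≤ c) :
    nu S (Pn S d) = wt d ∧ nu S ((Pn S d)⁻¹ * u) = wt c - wt d := by
  have hsplit : c = d + (c - d) := by
    funext s
    have h9 : d s ≤ c s := hle s
    simp only [Pi.add_apply, Pi.sub_apply]
    omega
  have hPn : u = Pn S d * Pn S (c - d) := by rw [← hc, hsplit, Pn_add, ← hsplit]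
  have hwt : wt c = wt d + wt (c - d) := by
    rw [wt, wt, wt, ← Finset.sum_add_distrib]
    apply Finset.sum_congr rfl
    intro s _
    have h9 : d s ≤ c s := hle s
    simp only [Pi.add_apply, Pi.sub_apply]
    omega
  have h1 : nu S (Pn S d) ≤ wt d := nu_Pn_le S hSsym hgen d
  have h2 : nu S (Pn S (c - d)) ≤ wt (c - d) := nu_Pn_le S hSsym hgen (c - d)
  have h3 : nu S u ≤ nu S (Pn S d) + nu S (Pn S (c - d)) := by
    rw [hPn]
    exact nu_mul_le S _ _ (relSet_nonempty S hSsym hgen _) (relSet_nonempty S hSsym hgen _)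
  have heq : (Pn S d)⁻¹ * u = Pn S (c - d) := by rw [hPn]; group
  constructor
  · omega
  · rw [heq]; omega


/-- conformal (sign-compatible) domination -/
def Conf {S : Set G} (y x : ↥S → ℤ) : Prop := pos y ≤ pos x ∧ neg y ≤ neg x

lemma Conf.trans {S : Set G} {z y x : ↥S → ℤ} (h1 : Conf z y) (h2 : Conf y x) : Conf z x :=
  ⟨le_trans h1.1 h2.1, le_trans h1.2 h2.2⟩

lemma Conf.l1_le {S : Set G} [Fintype ↥S] {y x : ↥S → ℤ} (h : Conf y x) : l1 y ≤ l1 x := by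
  apply Finset.sum_le_sum
  intro s _
  have h1 := h.1 s
  have h2 := h.2 s
  simp only [pos, neg] at h1 h2
  omega

lemma Conf.eq_of_l1_eq {S : Set G} [Fintype ↥S] {y x : ↥S → ℤ} (h : Conf y x)
    (hl : l1 y = l1 x) : y = x := by
  have hpt : ∀ s, (y s).natAbs = (x s).natAbs := by
    by_contra hcon
    push_neg at hcon
    obtain ⟨s0, hs0⟩ := hcon
    have hlt : (y s0).natAbs < (x s0).natAbs := by
      have h1 := h.1 s0
      have h2 := h.2 s0
      simp only [pos, neg] at h1 h2
      omega
    have : l1 y < l1 x := by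
      apply Finset.sum_lt_sum
      · intro s _
        have h1 := h.1 s
        have h2 := h.2 s
        simp only [pos, neg] at h1 h2
        omega
      · exact ⟨s0, Finset.mem_univ s0, hlt⟩
    omega
  funext s
  have h1 := h.1 s
  have h2 := h.2 s
  have h3 := hpt s
  simp only [pos, neg] at h1 h2
  omega

/-- the set of nontrivial relations -/
def Rset (S : Set G) [Fintype ↥S] : Set (↥S → ℤ) := {x | x ≠ 0 ∧ Pz S x = 1}

/-- minimal nontrivial relations -/
def MinRel (S : Set G) [Fintype ↥S] : Set (↥S → ℤ) :=
  {x | x ∈ Rset S ∧ ∀ y ∈ Rset S, Conf y x → y = x}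

lemma exists_minrel_conf : ∀ n (x : ↥S → ℤ), l1 x = n → x ∈ Rset S →
    ∃ y ∈ MinRel S, Conf y x := by
  intro n
  induction n using Nat.strong_induction_on with
  | _ n ih =>
    intro x hxn hx
    by_cases hmin : ∀ y ∈ Rset S, Conf y x → y = x
    · exact ⟨x, ⟨hx, hmin⟩, le_refl _, le_refl _⟩
    · push_neg at hmin
      obtain ⟨y, hy, hconf, hne⟩ := hmin
      have hlt : l1 y < n := by
        rcases lt_or_eq_of_le hconf.l1_le with h | h
        · omega
        · exact absurd (hconf.eq_of_l1_eq h) hne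
      obtain ⟨z, hz, hzconf⟩ := ih (l1 y) (by omega) y rfl hy
      exact ⟨z, hz, hzconf.trans hconf⟩

lemma pwo_conf (f : ℕ → (↥S → ℤ)) : ∃ m n, m < n ∧ Conf (f m) (f n) := by
  classical
  haveI : IsWellOrder ℕ (· < ·) := ⟨⟩
  have hpwo : (Set.univ : Set ((↥S ⊕ ↥S) → ℕ)).IsPWO :=
    Set.isPWO_univ_iff.2 inferInstance
  obtain ⟨m, n, hmn, hle⟩ := hpwo.exists_lt (f := fun k => Sum.elim (pos (f k)) (neg (f k)))
    (fun _ => Set.mem_univ _)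
  refine ⟨m, n, hmn, fun s => hle (Sum.inl s), fun s => hle (Sum.inr s)⟩

lemma exists_Gamma : ∃ Γ : ℕ, ∀ x ∈ Rset S,
    ∃ y, y ∈ Rset S ∧ Conf y x ∧ l1 y ≤ Γ := by
  classical
  by_cases hbd : ∃ Γ : ℕ, ∀ y ∈ MinRel S, l1 y ≤ Γ
  · obtain ⟨Γ, hΓ⟩ := hbd
    refine ⟨Γ, fun x hx => ?_⟩
    obtain ⟨y, hy, hconf⟩ := exists_minrel_conf S (l1 x) x rfl hx
    exact ⟨y, hy.1, hconf, hΓ y hy⟩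
  · exfalso
    push_neg at hbd
    have hstep : ∀ v : ↥S → ℤ, ∃ w, w ∈ MinRel S ∧ l1 v < l1 w := by
      intro v
      obtain ⟨w, hw, hlt⟩ := hbd (l1 v)
      exact ⟨w, hw, hlt⟩
    choose F hF1 hF2 using hstep
    set g : ℕ → (↥S → ℤ) := fun n => F^[n + 1] 0 with hg
    have hmem : ∀ n, g n ∈ MinRel S := by
      intro n
      rw [hg]
      simp only [Function.iterate_succ_apply']
      exact hF1 _
    have hmono : ∀ n, l1 (g n) < l1 (g (n + 1)) := by
      intro n
      have : g (n + 1) = F (g n) := by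
        rw [hg]
        simp only [Function.iterate_succ_apply']
      rw [this]
      exact hF2 _
    obtain ⟨m, n, hmn, hconf⟩ := pwo_conf S g
    have heq : g m = g n := (hmem n).2 (g m) (hmem m).1 hconf
    have : l1 (g m) < l1 (g n) := by
      clear heq hconf
      induction n with
      | zero => omega
      | succ n ihn =>
        rcases Nat.lt_succ_iff_lt_or_eq.1 hmn with h | h
        · exact lt_trans (ihn h) (hmono n)
        · subst h; exact hmono m
    rw [heq] at this
    omega


/-- slack of `ξ` over the budget `α` -/
def Phi {S : Set G} [Fintype ↥S] (α : ↥S → ℕ) (ξ : ↥S → ℤ) : ℕ :=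
  ∑ s : ↥S, (neg ξ s - α s)

lemma main_ind (Γ : ℕ) (hΓ : ∀ x ∈ Rset S, ∃ y, y ∈ Rset S ∧ Conf y x ∧ l1 y ≤ Γ)
    (α γ : ↥S → ℕ)
    (NoGood : ¬ ∃ g : ↥S → ℤ, g ≠ 0 ∧ Pz S g = 1 ∧ pos g ≤ γ ∧ neg g ≤ α) :
    ∀ n (ξ : ↥S → ℤ), l1 ξ = n → Pz S ξ = 1 → pos ξ ≤ γ → l1 ξ ≤ Γ * Phi α ξ := by
  intro n
  induction n using Nat.strong_induction_on with
  | _ n ih =>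
    intro ξ hln hrel hpos
    by_cases h0 : ξ = 0
    · subst h0
      simp [l1]
    · obtain ⟨y, hyR, hyconf, hyl1⟩ := hΓ ξ ⟨h0, hrel⟩
      have hyposγ : pos y ≤ γ := le_trans hyconf.1 hpos
      have hynegα : ¬ neg y ≤ α := by
        intro hle
        exact NoGood ⟨y, hyR.1, hyR.2, hyposγ, hle⟩
      obtain ⟨s0, hs0⟩ : ∃ s0, α s0 < neg y s0 := by
        by_contra hcon
        push_neg at hcon
        exact hynegα (fun s => hcon s)
      set ξ' : ↥S → ℤ := ξ - y with hξ'
      have hptpos : ∀ s, pos ξ' s = pos ξ s - pos y s := by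
        intro s
        have h1 := hyconf.1 s
        have h2 := hyconf.2 s
        simp only [pos, neg, hξ', Pi.sub_apply] at h1 h2 ⊢
        omega
      have hptneg : ∀ s, neg ξ' s = neg ξ s - neg y s := by
        intro s
        have h1 := hyconf.1 s
        have h2 := hyconf.2 s
        simp only [pos, neg, hξ', Pi.sub_apply] at h1 h2 ⊢
        omega
      have hptabs : ∀ s, (ξ' s).natAbs = (ξ s).natAbs - (y s).natAbs ∧
          (y s).natAbs ≤ (ξ s).natAbs := by
        intro s
        have h1 := hyconf.1 s
        have h2 := hyconf.2 s
        simp only [pos, neg, hξ', Pi.sub_apply] at h1 h2 ⊢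
        omega
      have hl1y : 1 ≤ l1 y := by
        obtain ⟨s, hs⟩ : ∃ s, y s ≠ 0 := by
          by_contra hcon
          push_neg at hcon
          exact hyR.1 (funext hcon)
        have : 1 ≤ (y s).natAbs := by omega
        calc 1 ≤ (y s).natAbs := this
          _ ≤ l1 y := Finset.single_le_sum (f := fun s => (y s).natAbs)
              (fun _ _ => Nat.zero_le _) (Finset.mem_univ s)
      have hl1le : l1 y ≤ l1 ξ := hyconf.l1_le
      have hl1' : l1 ξ' = l1 ξ - l1 y := by
        rw [l1, l1, l1, ← Finset.sum_tsub_distrib]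
        · exact Finset.sum_congr rfl fun s _ => (hptabs s).1
        · intro s _
          exact (hptabs s).2
      have hrel' : Pz S ξ' = 1 := by
        rw [hξ', Pz_sub, hrel, hyR.2]
        simp
      have hpos' : pos ξ' ≤ γ := by
        intro s
        rw [hptpos s]
        exact le_trans (Nat.sub_le _ _) (hpos s)
      have hPhi : Phi α ξ' + 1 ≤ Phi α ξ := by
        have hstrict : Phi α ξ' < Phi α ξ := by
          apply Finset.sum_lt_sum
          · intro s _
            rw [hptneg s]
            omega
          · refine ⟨s0, Finset.mem_univ s0, ?_⟩
            rw [hptneg s0]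
            have h2 : neg y s0 ≤ neg ξ s0 := hyconf.2 s0
            omega
        omega
      have hlt : l1 ξ' < n := by omega
      have hIH := ih (l1 ξ') hlt ξ' rfl hrel' hpos'
      calc l1 ξ = l1 ξ' + l1 y := by omega
        _ ≤ Γ * Phi α ξ' + Γ := Nat.add_le_add hIH hyl1
        _ = Γ * (Phi α ξ' + 1) := by ring
        _ ≤ Γ * Phi α ξ := Nat.mul_le_mul_left Γ hPhi

lemma Pn_single [DecidableEq ↥S] (t : ↥S) : Pn S (Pi.single t 1) = (t : G) := by
  rw [Pn, Finset.prod_eq_single t]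
  · simp
  · intro b _ hb
    rw [Pi.single_eq_of_ne hb, pow_zero]
  · simp

/-- The key geometric estimate: if no nontrivial element lies on geodesics to both
`u` and `v` simultaneously, then `ν u + ν v ≤ C · ν (u⁻¹ v)`. -/
lemma apex_bound (hSsym : ∀ s ∈ S, s⁻¹ ∈ S) (hgen : Subgroup.closure S = ⊤) :
    ∃ C : ℕ, ∀ u v : G,
      (∀ p : G, p ≠ 1 →
        ¬(nu S p + nu S (p⁻¹ * u) = nu S u ∧ nu S p + nu S (p⁻¹ * v) = nu S v)) →
      nu S u + nu S v ≤ C * nu S (u⁻¹ * v) := by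
  classical
  obtain ⟨Γ, hΓ⟩ := exists_Gamma S
  refine ⟨Γ + 1, fun u v hng => ?_⟩
  obtain ⟨α, hα1, hα2⟩ := exists_geodesic_vec S hSsym hgen u
  obtain ⟨γ, hγ1, hγ2⟩ := exists_geodesic_vec S hSsym hgen v
  obtain ⟨η, hη1, hη2⟩ := exists_geodesic_vec S hSsym hgen (u⁻¹ * v)
  -- Step 1: disjoint supports
  have hdisj : ∀ s : ↥S, α s = 0 ∨ γ s = 0 := by
    intro s
    by_contra hcon
    push_neg at hcon
    obtain ⟨hαs, hγs⟩ := hcon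
    have hsingle_le_α : Pi.single s 1 ≤ α := by
      intro t
      by_cases ht : t = s
      · subst ht; rw [Pi.single_eq_same]; exact Nat.one_le_iff_ne_zero.2 hαs
      · rw [Pi.single_eq_of_ne ht]; exact Nat.zero_le _
    have hsingle_le_γ : Pi.single s 1 ≤ γ := by
      intro t
      by_cases ht : t = s
      · subst ht; rw [Pi.single_eq_same]; exact Nat.one_le_iff_ne_zero.2 hγs
      · rw [Pi.single_eq_of_ne ht]; exact Nat.zero_le _
    have hwt_single : wt (S := S) (Pi.single s 1) = 1 := by
      rw [wt, Finset.sum_pi_single']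
      simp
    obtain ⟨he1, he2⟩ := prefix_exact S hSsym hgen hα1 hα2 hsingle_le_α
    obtain ⟨hf1, hf2⟩ := prefix_exact S hSsym hgen hγ1 hγ2 hsingle_le_γ
    rw [Pn_single, hwt_single] at he1 he2 hf1 hf2
    have h1α : 1 ≤ wt α :=
      le_trans (Nat.one_le_iff_ne_zero.2 hαs) (Finset.single_le_sum (f := fun t => α t)
        (fun _ _ => Nat.zero_le _) (Finset.mem_univ s))
    have h1γ : 1 ≤ wt γ :=
      le_trans (Nat.one_le_iff_ne_zero.2 hγs) (Finset.single_le_sum (f := fun t => γ t)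
        (fun _ _ => Nat.zero_le _) (Finset.mem_univ s))
    have hp1 : (s : G) ≠ 1 := by
      intro hc
      rw [hc, nu_one] at he1
      omega
    refine hng (s : G) hp1 ⟨?_, ?_⟩
    · rw [he1, he2]
      omega
    · rw [hf1, hf2]
      omega
  -- Step 2: no good piece
  have hng2 : ¬ ∃ g : ↥S → ℤ, g ≠ 0 ∧ Pz S g = 1 ∧ pos g ≤ γ ∧ neg g ≤ α := by
    rintro ⟨g, hg0, hgrel, hgpos, hgneg⟩
    have hpq : Pn S (pos g) = Pn S (neg g) := by
      have h := Pz_eq_pos_neg S g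
      rw [hgrel] at h
      exact mul_inv_eq_one.mp h.symm
    obtain ⟨he1, he2⟩ := prefix_exact S hSsym hgen hα1 hα2 hgneg
    obtain ⟨hf1, hf2⟩ := prefix_exact S hSsym hgen hγ1 hγ2 hgpos
    have hwtg : 1 ≤ wt (pos g) + wt (neg g) := by
      obtain ⟨s, hs⟩ : ∃ s, g s ≠ 0 := by
        by_contra hcon
        push_neg at hcon
        exact hg0 (funext hcon)
      have h1 : 1 ≤ pos g s + neg g s := by
        simp only [pos, neg]
        omega
      have h2 : pos g s ≤ wt (pos g) := Finset.single_le_sum (f := fun t => pos g t)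
          (fun _ _ => Nat.zero_le _) (Finset.mem_univ s)
      have h3 : neg g s ≤ wt (neg g) := Finset.single_le_sum (f := fun t => neg g t)
          (fun _ _ => Nat.zero_le _) (Finset.mem_univ s)
      omega
    have hwteq : wt (pos g) = wt (neg g) := by rw [← hf1, ← he1, hpq]
    have hp1 : Pn S (pos g) ≠ 1 := by
      intro hc
      rw [hc, nu_one] at hf1
      omega
    have hwtγ : wt (pos g) ≤ wt γ := Finset.sum_le_sum (fun s _ => hgpos s)
    have hwtα : wt (neg g) ≤ wt α := Finset.sum_le_sum (fun s _ => hgneg s)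
    refine hng (Pn S (pos g)) hp1 ⟨?_, ?_⟩
    · rw [hpq, he1, he2]
      omega
    · rw [hf1, hf2]
      omega
  -- Step 3: the balance vector
  set ξ : ↥S → ℤ := (fun s => (γ s : ℤ) - (α s : ℤ) - (η s : ℤ)) with hξ
  have hrelξ : Pz S ξ = 1 := by
    have : ξ = ((fun s => (γ s : ℤ)) - (fun s => (α s : ℤ))) - (fun s => (η s : ℤ)) := rfl
    rw [this, Pz_sub, Pz_sub, Pz_natCast, Pz_natCast, Pz_natCast, hα1, hγ1, hη1,
      mul_inv_rev, inv_inv, mul_mul_mul_comm]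
    simp
  have hposξ : pos ξ ≤ γ := by
    intro s
    rcases hdisj s with h | h <;>
    · simp only [pos, hξ, h]
      omega
  have hPhiξ : Phi α ξ ≤ wt η := by
    apply Finset.sum_le_sum
    intro s _
    simp only [neg, hξ]
    omega
  have hl1ξ : wt α + wt γ ≤ l1 ξ + wt η := by
    rw [wt, wt, l1, wt, ← Finset.sum_add_distrib, ← Finset.sum_add_distrib]
    apply Finset.sum_le_sum
    intro s _
    rcases hdisj s with h | h <;>
    · simp only [hξ, h]
      omega
  have hmain := main_ind S Γ hΓ α γ hng2 (l1 ξ) ξ rfl hrelξ hposξ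
  have hr : wt η = nu S (u⁻¹ * v) := hη2
  calc nu S u + nu S v = wt α + wt γ := by rw [hα2, hγ2]
    _ ≤ l1 ξ + wt η := hl1ξ
    _ ≤ Γ * Phi α ξ + wt η := by omega
    _ ≤ Γ * wt η + wt η := by
        have := Nat.mul_le_mul_left Γ hPhiξ
        omega
    _ = (Γ + 1) * wt η := by ring
    _ = (Γ + 1) * nu S (u⁻¹ * v) := by rw [hr]

end Stmt11Aux


/-- Let `G` be a finitely generated abelian group with finite symmetric
generating set `S` (with `1 ∉ S`) and word metric `d`. Then there is a constant `C`
such that every rigid triple `{x,y,z}` satisfies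
`d(x,y) + d(y,z) + d(z,x) ≤ C · d(x,y)`. -/
theorem stmt11 {G : Type*} [CommGroup G] (S : Set G) (hSfin : S.Finite)
    (hSsym : ∀ s ∈ S, s⁻¹ ∈ S) (hone : (1 : G) ∉ S)
    (hgen : Subgroup.closure S = ⊤) :
    ∃ C : ℕ, ∀ x y z : G, RigidTriple (wordDist S) x y z →
      wordDist S x y + wordDist S y z + wordDist S z x ≤ C * wordDist S x y := by
  classical
  haveI : Fintype ↥S := hSfin.fintype
  obtain ⟨C0, hC0⟩ := Stmt11Aux.apex_bound S hSsym hgen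
  refine ⟨C0 + 1, fun x y z hrig => ?_⟩
  obtain ⟨hxy, hyz, hxz, hax, hay, haz⟩ := hrig
  set u : G := z⁻¹ * x with hu
  set v : G := z⁻¹ * y with hv
  have hng : ∀ p : G, p ≠ 1 →
      ¬(Stmt11Aux.nu S p + Stmt11Aux.nu S (p⁻¹ * u) = Stmt11Aux.nu S u ∧
        Stmt11Aux.nu S p + Stmt11Aux.nu S (p⁻¹ * v) = Stmt11Aux.nu S v) := by
    intro p hp hcontra
    have hwz : z * p ≠ z := by
      intro h
      exact hp (mul_left_cancel (a := z) (show z * p = z * 1 by rw [mul_one]; exact h))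
    apply haz (z * p) hwz
    have e1 : wordDist S z (z * p) = Stmt11Aux.nu S p := by
      rw [Stmt11Aux.wordDist_eq, inv_mul_cancel_left]
    have e2 : wordDist S (z * p) x = Stmt11Aux.nu S (p⁻¹ * u) := by
      rw [Stmt11Aux.wordDist_eq, hu, mul_inv_rev, mul_assoc]
    have e3 : wordDist S (z * p) y = Stmt11Aux.nu S (p⁻¹ * v) := by
      rw [Stmt11Aux.wordDist_eq, hv, mul_inv_rev, mul_assoc]
    have e4 : wordDist S z x = Stmt11Aux.nu S u := by rw [Stmt11Aux.wordDist_eq, hu]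
    have e5 : wordDist S z y = Stmt11Aux.nu S v := by rw [Stmt11Aux.wordDist_eq, hv]
    rw [e1, e2, e3, e4, e5]
    exact hcontra
  have hmain := hC0 u v hng
  have huv : u⁻¹ * v = x⁻¹ * y := by
    rw [hu, hv, mul_inv_rev, inv_inv, mul_assoc, mul_inv_cancel_left]
  rw [huv] at hmain
  have d1 : wordDist S x y = Stmt11Aux.nu S (x⁻¹ * y) := Stmt11Aux.wordDist_eq S x y
  have d2 : wordDist S y z = Stmt11Aux.nu S v := by
    rw [Stmt11Aux.wordDist_eq]
    have : y⁻¹ * z = v⁻¹ := by rw [hv, mul_inv_rev, inv_inv]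
    rw [this, Stmt11Aux.nu_inv S hSsym]
  have d3 : wordDist S z x = Stmt11Aux.nu S u := by rw [Stmt11Aux.wordDist_eq, hu]
  rw [d1, d2, d3]
  have : (C0 + 1) * Stmt11Aux.nu S (x⁻¹ * y)
      = Stmt11Aux.nu S (x⁻¹ * y) + C0 * Stmt11Aux.nu S (x⁻¹ * y) := by ring
  omega
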